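/- Let G be an outer k-planar graph with an outer k-planar drawing D = (v_1,…,v_n), and suppose that in D no edge pierces the vertex pair {v_1, v_i}. Then there are at most 2k+2 internally vertex-disjoint non-trivial paths (paths with at least two edges) between v_1 and v_i in G. -/

import Mathlib

open Function

/-- Position of the lower endpoint of an edge in a circular drawing given by
vertex positions `π`. -/
def elo {V : Type*} (π : V → ℕ) : Sym2 V → ℕ :=
  Sym2.lift ⟨fun a b => min (π a) (π b), fun a b => min_comm (π a) (π b)⟩

/-- Position of the upper endpoint of an edge in a circular drawing. -/
def ehi {V : Type*} (π : V → ℕ) : Sym2 V → ℕ :=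
  Sym2.lift ⟨fun a b => max (π a) (π b), fun a b => max_comm (π a) (π b)⟩

/-- Two edges (or vertex pairs) cross (equivalently, the first pierces the
second) in the circular drawing given by positions `π`:
`i < i' < j < j'` or `i' < i < j' < j`. -/
def ecross {V : Type*} (π : V → ℕ) (e f : Sym2 V) : Prop :=
  (elo π e < elo π f ∧ elo π f < ehi π e ∧ ehi π e < ehi π f) ∨
  (elo π f < elo π e ∧ elo π e < ehi π f ∧ ehi π f < ehi π e)

/-- The number of edges of `G` crossing `e` in the circular drawing `π`. -/
noncomputable def crossNum {V : Type*} (G : SimpleGraph V) (π : V → ℕ)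
    (e : Sym2 V) : ℕ :=
  {f | f ∈ G.edgeSet ∧ ecross π e f}.ncard

/-- `π` is an outer `k`-planar drawing of `G`: an injective assignment of
positions (a circular order) such that every edge crosses at most `k` edges. -/
def IsOuterKPlanar {V : Type*} (G : SimpleGraph V) (k : ℕ) (π : V → ℕ) : Prop :=
  Injective π ∧ ∀ e ∈ G.edgeSet, crossNum G π e ≤ k

/-- If in an outer `k`-planar drawing no edge pierces the pair `{v_1, v_i}`
(where `v_1` is the first vertex of the drawing), then there are at most
`2k+2` pairwise internally vertex-disjoint non-trivial paths (paths with at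
least two edges) between `v_1` and `v_i`. -/
@[simp] lemma elo_mk {V : Type*} (π : V → ℕ) (x y : V) :
    elo π s(x, y) = min (π x) (π y) := rfl

@[simp] lemma ehi_mk {V : Type*} (π : V → ℕ) (x y : V) :
    ehi π s(x, y) = max (π x) (π y) := rfl

lemma sym2_cases {V : Type*} (f : Sym2 V) : ∃ c d, f = s(c, d) := by
  induction f using Sym2.ind with
  | _ c d => exact ⟨c, d, rfl⟩

lemma jump {V : Type*} {G : SimpleGraph V} (π : V → ℕ) (c : ℕ) {a b : V}
    (W : G.Walk a b) :
    (∀ z ∈ W.support, π z ≠ c) →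
    (π a < c ∧ c < π b ∨ π b < c ∧ c < π a) →
    ∃ f ∈ W.edges, elo π f < c ∧ c < ehi π f := by
  induction W with
  | nil =>
    intro _ hside
    omega
  | cons h p ih =>
    rename_i x y z
    intro hz hside
    by_cases hc : (π x < c ∧ c < π y) ∨ (π y < c ∧ c < π x)
    · exact ⟨s(x, y), by simp, by simp only [elo_mk, ehi_mk]; omega⟩
    · have hy : π y ≠ c := hz y (by simp)
      obtain ⟨f, hf1, hf2⟩ := ih (fun w hw => hz w (by simp [hw])) (by omega)
      exact ⟨f, by simp [hf1], hf2⟩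

lemma elo_gt {V : Type*} {G : SimpleGraph V} (π : V → ℕ) {x y u : V}
    {p : G.Walk x y} (hu : u ∉ p.support) (hmin : ∀ z, π u ≤ π z)
    (hinj : Injective π) {f : Sym2 V} (hf : f ∈ p.edges) : π u < elo π f := by
  obtain ⟨c, d, rfl⟩ := sym2_cases f
  have hc := SimpleGraph.Walk.fst_mem_support_of_mem_edges p hf
  have hd := SimpleGraph.Walk.snd_mem_support_of_mem_edges p hf
  simp only [elo_mk]
  refine lt_min ?_ ?_
  · refine lt_of_le_of_ne (hmin c) fun h => ?_
    rw [← hinj h] at hc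
    exact hu hc
  · refine lt_of_le_of_ne (hmin d) fun h => ?_
    rw [← hinj h] at hd
    exact hu hd

theorem stmt14 {V : Type*} [Fintype V] (G : SimpleGraph V) (k : ℕ)
    (π : V → ℕ) (hD : IsOuterKPlanar G k π)
    (u v : V) (huv : u ≠ v)
    (hfirst : ∀ z : V, π u ≤ π z)
    (hnopierce : ∀ f ∈ G.edgeSet, ¬ ecross π f s(u, v))
    (m : ℕ) (P : Fin m → G.Walk u v)
    (hpath : ∀ i, (P i).IsPath) (hlen : ∀ i, 2 ≤ (P i).length)
    (hinj : Function.Injective P)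
    (hdisj : ∀ i j, i ≠ j → ∀ x, x ∈ (P i).support → x ∈ (P j).support →
      x = u ∨ x = v) :
    m ≤ 2 * k + 2 := by
  classical
  obtain ⟨hπinj, hcross⟩ := hD
  -- Step 1: destructure each path into its first edge and the rest.
  have key : ∀ i : Fin m, ∃ (x : V) (w : G.Walk x v),
      G.Adj u x ∧ u ∉ w.support ∧ (∀ z ∈ w.support, z ∈ (P i).support) ∧ x ≠ v := by
    intro i
    obtain ⟨x, hadj, w, hPi⟩ := SimpleGraph.Walk.exists_eq_cons_of_ne huv (P i)
    have hp := hpath i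
    have hl := hlen i
    rw [hPi, SimpleGraph.Walk.cons_isPath_iff] at hp
    rw [hPi] at hl
    refine ⟨x, w, hadj, hp.2, ?_, ?_⟩
    · intro z hzw
      rw [hPi, SimpleGraph.Walk.support_cons]
      exact List.mem_cons_of_mem _ hzw
    · intro hxv
      subst hxv
      rw [(SimpleGraph.Walk.isPath_iff_eq_nil).mp hp.1] at hl
      simp at hl
  choose a q hadj hu hsup hav using key
  have hau : ∀ i, a i ≠ u := by
    intro i h
    apply hu i
    rw [← h]
    exact (q i).start_mem_support
  have asup : ∀ i, a i ∈ (P i).support := fun i => hsup i _ (q i).start_mem_support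
  have aneq : ∀ i j, i ≠ j → a i ≠ a j := by
    intro i j hij h
    have h2 : a i ∈ (P j).support := by rw [h]; exact asup j
    rcases hdisj i j hij (a i) (asup i) h2 with h' | h'
    · exact hau i h'
    · exact hav i h'
  have hanotin : ∀ i j, i ≠ j → a i ∉ (q j).support := by
    intro i j hij hmem
    have h2 : a i ∈ (P j).support := hsup j _ hmem
    rcases hdisj i j hij (a i) (asup i) h2 with h' | h'
    · exact hau i h'
    · exact hav i h'
  have hπav : ∀ i, π (a i) ≠ π v := fun i h => hav i (hπinj h)
  -- Step 2: key counting bound for one side.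
  have bound : ∀ S : Finset (Fin m), ∀ j0 ∈ S,
      (∀ j ∈ S, j ≠ j0 →
        (π (a j) < π (a j0) ∧ π (a j0) < π v) ∨
        (π v < π (a j0) ∧ π (a j0) < π (a j))) → S.card ≤ k + 1 := by
    intro S j0 hj0 hopp
    have hsel : ∀ j : Fin m, ∃ f : Sym2 V, j ∈ S.erase j0 →
        f ∈ (q j).edges ∧ elo π f < π (a j0) ∧ π (a j0) < ehi π f := by
      intro j
      by_cases hj : j ∈ S.erase j0
      · have hjne := Finset.ne_of_mem_erase hj
        have hjS := Finset.mem_of_mem_erase hj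
        have hzc : ∀ z ∈ (q j).support, π z ≠ π (a j0) := by
          intro z hzq hzc
          have hz : z = a j0 := hπinj hzc
          rw [hz] at hzq
          exact hanotin j0 j (Ne.symm hjne) hzq
        obtain ⟨f, h1, h2⟩ := jump π (π (a j0)) (q j) hzc (by
          rcases hopp j hjS hjne with h | h
          · exact Or.inl ⟨h.1, h.2⟩
          · exact Or.inr ⟨h.1, h.2⟩)
        exact ⟨f, fun _ => ⟨h1, h2⟩⟩
      · exact ⟨s(u, u), fun h => absurd h hj⟩
    choose g hg using hsel
    have hginj : Set.InjOn g ↑(S.erase j0) := by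
      intro j1 hj1 j2 hj2 hgeq
      simp only [Finset.mem_coe] at hj1 hj2
      by_contra hne
      have hf1 := (hg j1 hj1).1
      have hf2 : g j1 ∈ (q j2).edges := by rw [hgeq]; exact (hg j2 hj2).1
      obtain ⟨c, d, hcd⟩ := sym2_cases (g j1)
      rw [hcd] at hf1 hf2
      have hadjcd : G.Adj c d :=
        SimpleGraph.Walk.edges_subset_edgeSet (q j1) hf1
      have hc1 := SimpleGraph.Walk.fst_mem_support_of_mem_edges _ hf1
      have hd1 := SimpleGraph.Walk.snd_mem_support_of_mem_edges _ hf1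
      have hc2 := SimpleGraph.Walk.fst_mem_support_of_mem_edges _ hf2
      have hd2 := SimpleGraph.Walk.snd_mem_support_of_mem_edges _ hf2
      have hcv : c = v := by
        rcases hdisj j1 j2 hne c (hsup j1 c hc1) (hsup j2 c hc2) with h | h
        · exfalso; rw [h] at hc1; exact hu j1 hc1
        · exact h
      have hdv : d = v := by
        rcases hdisj j1 j2 hne d (hsup j1 d hd1) (hsup j2 d hd2) with h | h
        · exfalso; rw [h] at hd1; exact hu j1 hd1
        · exact h
      exact G.ne_of_adj hadjcd (hcv.trans hdv.symm)
    have hsub : ∀ f ∈ (S.erase j0).image g,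
        f ∈ {f | f ∈ G.edgeSet ∧ ecross π s(u, a j0) f} := by
      intro f hf
      obtain ⟨j, hj, rfl⟩ := Finset.mem_image.mp hf
      obtain ⟨h1, h2, h3⟩ := hg j hj
      refine ⟨SimpleGraph.Walk.edges_subset_edgeSet (q j) h1, Or.inl ?_⟩
      have hlo : π u < elo π (g j) := elo_gt π (hu j) hfirst hπinj h1
      have he1 : elo π s(u, a j0) = π u := by
        simp only [elo_mk]; exact min_eq_left (hfirst _)
      have he2 : ehi π s(u, a j0) = π (a j0) := by
        simp only [ehi_mk]; exact max_eq_right (hfirst _)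
      rw [he1, he2]
      exact ⟨hlo, h2, h3⟩
    have hkk : ((S.erase j0).image g).card ≤ k := by
      have h1 : (↑((S.erase j0).image g) : Set (Sym2 V)) ⊆
          {f | f ∈ G.edgeSet ∧ ecross π s(u, a j0) f} :=
        fun f hf => hsub f (Finset.mem_coe.mp hf)
      have h2 := Set.ncard_le_ncard h1 (Set.toFinite _)
      rw [Set.ncard_coe_finset] at h2
      exact h2.trans (hcross s(u, a j0) ((G.mem_edgeSet).mpr (hadj j0)))
    have hcard := Finset.card_image_of_injOn hginj
    have herase := Finset.card_erase_add_one hj0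
    omega
  -- Step 3: split by side and conclude.
  have h1 : (Finset.univ.filter (fun i : Fin m => π (a i) < π v)).card ≤ k + 1 := by
    rcases Finset.eq_empty_or_nonempty
        (Finset.univ.filter (fun i : Fin m => π (a i) < π v)) with he | hne
    · rw [he]; simp
    · obtain ⟨j0, hj0, hmax⟩ := Finset.exists_max_image _ (fun i => π (a i)) hne
      refine bound _ j0 hj0 ?_
      intro j hj hjne
      left
      have hle := hmax j hj
      have hne2 : π (a j) ≠ π (a j0) := fun h => aneq j j0 hjne (hπinj h)
      exact ⟨lt_of_le_of_ne hle hne2, (Finset.mem_filter.mp hj0).2⟩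
  have h2 : (Finset.univ.filter (fun i : Fin m => ¬ π (a i) < π v)).card ≤ k + 1 := by
    rcases Finset.eq_empty_or_nonempty
        (Finset.univ.filter (fun i : Fin m => ¬ π (a i) < π v)) with he | hne
    · rw [he]; simp
    · obtain ⟨j0, hj0, hmin⟩ := Finset.exists_min_image _ (fun i => π (a i)) hne
      refine bound _ j0 hj0 ?_
      intro j hj hjne
      right
      have hle := hmin j hj
      have hne2 : π (a j0) ≠ π (a j) := fun h => aneq j0 j (Ne.symm hjne) (hπinj h)
      have hj0v : π v < π (a j0) :=
        lt_of_le_of_ne (not_lt.mp (Finset.mem_filter.mp hj0).2) (Ne.symm (hπav j0))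
      exact ⟨hj0v, lt_of_le_of_ne hle hne2⟩
  have hm : (Finset.univ.filter (fun i : Fin m => π (a i) < π v)).card +
      (Finset.univ.filter (fun i : Fin m => ¬ π (a i) < π v)).card = m := by
    rw [Finset.card_filter_add_card_filter_not]
    simp
  omega
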